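/- Trace equivalence is the maximal invariant of the dead-state progression: R_≡ = {(s,u) | ⟦s⟧ = ⟦u⟧} progresses to itself, and every relation R that progresses to itself (with the dead-state predicate) is contained in R_≡. -/

import Mathlib

/-- Result of a GKAT automaton transition on an atom. -/
inductive GRes (S A : Type) where
  | reject : GRes S A
  | accept : GRes S A
  | step : S → A → GRes S A

/-- Finite traces: alternating words of atoms and actions ending in an atom. -/
inductive Trace (At A : Type) where
  | atom : At → Trace At A
  | cons : At → A → Trace At A → Trace At A

/-- Finite trace semantics of a state of a GKAT automaton. -/
inductive InTrace {S At A : Type} (ζ : S → At → GRes S A) : S → Trace At A → Prop where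
  | accept {s α} : ζ s α = GRes.accept → InTrace ζ s (Trace.atom α)
  | step {s α s' p w} : ζ s α = GRes.step s' p → InTrace ζ s' w →
      InTrace ζ s (Trace.cons α p w)

/-- A state is dead when its finite trace semantics is empty. -/
def Dead {S At A : Type} (ζ : S → At → GRes S A) (s : S) : Prop :=
  ∀ w, ¬ InTrace ζ s w

/-- Progression with the dead-state predicate between two GKAT automata. -/
def DProgress {S U At A : Type} (ζ₁ : S → At → GRes S A) (ζ₂ : U → At → GRes U A)
    (R R' : S → U → Prop) : Prop :=
  ∀ s u, R s u → ∀ α,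
    ((ζ₁ s α = GRes.accept) ↔ (ζ₂ u α = GRes.accept)) ∧
    (∀ s' p, ζ₁ s α = GRes.step s' p → ζ₂ u α = GRes.reject → Dead ζ₁ s') ∧
    (∀ u' p, ζ₂ u α = GRes.step u' p → ζ₁ s α = GRes.reject → Dead ζ₂ u') ∧
    (∀ s' p u' q, ζ₁ s α = GRes.step s' p → ζ₂ u α = GRes.step u' q → p ≠ q →
      Dead ζ₁ s' ∧ Dead ζ₂ u') ∧
    (∀ s' u' p, ζ₁ s α = GRes.step s' p → ζ₂ u α = GRes.step u' p → R' s' u')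

/-- trace equivalence is the maximal invariant of the dead-state
progression: `R_≡` progresses to itself, and every relation progressing to
itself is contained in `R_≡`. -/
theorem trace_equiv_is_maximal_invariant {S U At A : Type}
    (ζ₁ : S → At → GRes S A) (ζ₂ : U → At → GRes U A) :
    DProgress ζ₁ ζ₂
      (fun s u => ∀ w, InTrace ζ₁ s w ↔ InTrace ζ₂ u w)
      (fun s u => ∀ w, InTrace ζ₁ s w ↔ InTrace ζ₂ u w) ∧
    (∀ R : S → U → Prop, DProgress ζ₁ ζ₂ R R →
      ∀ s u, R s u → ∀ w, InTrace ζ₁ s w ↔ InTrace ζ₂ u w) := by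

  constructor
  · intro s u hR α
    refine ⟨?_, ?_, ?_, ?_, ?_⟩
    · constructor
      · intro h
        have := (hR (Trace.atom α)).mp (InTrace.accept h)
        cases this with | accept h2 => exact h2
      · intro h
        have := (hR (Trace.atom α)).mpr (InTrace.accept h)
        cases this with | accept h2 => exact h2
    · intro s' p h1 h2 w hw
      have := (hR (Trace.cons α p w)).mp (InTrace.step h1 hw)
      cases this with | step h3 _ => rw [h2] at h3; cases h3
    · intro u' p h1 h2 w hw
      have := (hR (Trace.cons α p w)).mpr (InTrace.step h1 hw)
      cases this with | step h3 _ => rw [h2] at h3; cases h3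
    · intro s' p u' q h1 h2 hpq
      constructor
      · intro w hw
        have := (hR (Trace.cons α p w)).mp (InTrace.step h1 hw)
        cases this with | step h3 _ =>
          rw [h2] at h3
          exact hpq (GRes.step.inj h3).2.symm
      · intro w hw
        have := (hR (Trace.cons α q w)).mpr (InTrace.step h2 hw)
        cases this with | step h3 _ =>
          rw [h1] at h3
          exact hpq (GRes.step.inj h3).2
    · intro s' u' p h1 h2 w
      constructor
      · intro hw
        have := (hR (Trace.cons α p w)).mp (InTrace.step h1 hw)
        cases this with | step h3 hw2 =>
          rw [h2] at h3
          rw [(GRes.step.inj h3).1]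
          exact hw2
      · intro hw
        have := (hR (Trace.cons α p w)).mpr (InTrace.step h2 hw)
        cases this with | step h3 hw2 =>
          rw [h1] at h3
          rw [(GRes.step.inj h3).1]
          exact hw2
  · intro R hP s u hRsu w
    induction w generalizing s u with
    | atom α =>
      obtain ⟨hacc, _, _, _, _⟩ := hP s u hRsu α
      constructor
      · intro h; cases h with | accept h2 => exact InTrace.accept (hacc.mp h2)
      · intro h; cases h with | accept h2 => exact InTrace.accept (hacc.mpr h2)
    | cons α p w ih =>
      obtain ⟨hacc, hd1, hd2, hdiff, hstep⟩ := hP s u hRsu α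
      constructor
      · intro h
        cases h with | step h1 hw =>
          cases h2 : ζ₂ u α with
          | reject => exact absurd hw (hd1 _ _ h1 h2 w)
          | accept => rw [hacc.mpr h2] at h1; cases h1
          | step u' q =>
            by_cases hpq : p = q
            · subst hpq
              exact InTrace.step h2 ((ih _ _ (hstep _ _ _ h1 h2)).mp hw)
            · exact absurd hw ((hdiff _ _ _ _ h1 h2 hpq).1 w)
      · intro h
        cases h with | step h2 hw =>
          cases h1 : ζ₁ s α with
          | reject => exact absurd hw (hd2 _ _ h2 h1 w)
          | accept => rw [hacc.mp h1] at h2; cases h2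
          | step s' q =>
            by_cases hpq : q = p
            · subst hpq
              exact InTrace.step h1 ((ih _ _ (hstep _ _ _ h1 h2)).mpr hw)
            · exact absurd hw ((hdiff _ _ _ _ h1 h2 hpq).2 w)
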